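/- Let E be a complete real inner product space and let f : E → ℝ be 1-Lipschitz and differentiable at x ∈ E. Suppose there exists y ∈ E with y ≠ x such that f(x) ≥ 0, f(y) ≤ 0, and f(x) - f(y) = ‖x - y‖. Then the infimum of ‖x - z‖ over the set {z ∈ E : f(z) ≤ 0} equals f(x), and this infimum is attained (at x_δ = x - f(x) • ∇f(x)). In particular the certified robustness lower bound |f(x)| ≤ ‖x - adv(f, x)‖ is tight. -/

import Mathlib

/-- Tightness of the certified robustness bound: the infimum of `‖x - z‖` over
`{z | f z ≤ 0}` equals `f x` and is attained at `x_δ = x - f x • ∇f(x)`. -/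
theorem otnn_certificate_tight {E : Type*} [NormedAddCommGroup E]
    [InnerProductSpace ℝ E] [CompleteSpace E]
    (f : E → ℝ) (hf : LipschitzWith 1 f) (x : E) (hdiff : DifferentiableAt ℝ f x)
    (h : ∃ y : E, y ≠ x ∧ 0 ≤ f x ∧ f y ≤ 0 ∧ f x - f y = ‖x - y‖) :
    IsLeast ((fun z => ‖x - z‖) '' {z : E | f z ≤ 0}) (f x) ∧
    f (x - f x • gradient f x) ≤ 0 ∧
    ‖x - (x - f x • gradient f x)‖ = f x := by
  obtain ⟨y, hyx, hfx, hfy, heq⟩ := h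
  -- basic Lipschitz estimate
  have lip : ∀ a b : E, f a - f b ≤ ‖a - b‖ := by
    intro a b
    have := hf.dist_le_mul a b
    rw [NNReal.coe_one, one_mul, Real.dist_eq, dist_eq_norm] at this
    exact (le_abs_self _).trans this
  set T : ℝ := ‖x - y‖ with hT
  have hT0 : 0 < T := by
    rw [hT, norm_pos_iff, sub_ne_zero]
    exact fun hxy => hyx hxy.symm
  set u : E := T⁻¹ • (x - y) with hu
  have hunorm : ‖u‖ = 1 := by
    rw [hu, norm_smul, norm_inv, Real.norm_eq_abs, abs_of_pos hT0, ← hT,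
      inv_mul_cancel₀ hT0.ne']
  have hTu : T • u = x - y := by
    rw [hu, smul_smul, mul_inv_cancel₀ hT0.ne', one_smul]
  -- key: along the segment, f decreases at unit rate
  have gkey : ∀ t ∈ Set.Icc (0:ℝ) T, f (x - t • u) = f x - t := by
    intro t ⟨ht0, htT⟩
    have h1 : f x - f (x - t • u) ≤ t := by
      have := lip x (x - t • u)
      rwa [sub_sub_cancel, norm_smul, Real.norm_eq_abs, abs_of_nonneg ht0, hunorm,
        mul_one] at this
    have h2 : f (x - t • u) - f y ≤ T - t := by
      have hy : y = x - T • u := by rw [hTu]; abel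
      have hle := lip (x - t • u) y
      have hny : ‖x - t • u - y‖ = T - t := by
        rw [hy, sub_sub_sub_cancel_left, ← sub_smul, norm_smul, Real.norm_eq_abs,
          abs_of_nonneg (by linarith), hunorm, mul_one]
      linarith [hny ▸ hle]
    linarith
  -- derivative of t ↦ f (x - t • u) at 0
  have hc : HasDerivAt (fun t : ℝ => x - t • u) (-u) 0 := by
    simpa using ((hasDerivAt_id (0:ℝ)).smul_const u).const_sub x
  have hgd : HasDerivAt (fun t : ℝ => f (x - t • u)) (fderiv ℝ f x (-u)) 0 := by
    have hfd : HasFDerivAt f (fderiv ℝ f x) ((fun t : ℝ => x - t • u) 0) := by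
      simpa using hdiff.hasFDerivAt
    exact hfd.comp_hasDerivAt (0:ℝ) hc
  -- on [0,∞) the composite equals fun t => f x - t near 0
  have heqev : (fun t : ℝ => f (x - t • u)) =ᶠ[nhdsWithin 0 (Set.Ici 0)]
      (fun t => f x - t) := by
    filter_upwards [Filter.inter_mem (self_mem_nhdsWithin)
      (nhdsWithin_le_nhds (Metric.ball_mem_nhds (0:ℝ) hT0))] with t ht
    obtain ⟨ht0, htb⟩ := ht
    have : |t| < T := by simpa [Real.dist_eq] using htb
    exact gkey t ⟨ht0, (le_abs_self t).trans this.le⟩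
  have hd1 : HasDerivWithinAt (fun t : ℝ => f (x - t • u)) (fderiv ℝ f x (-u))
      (Set.Ici 0) 0 := hgd.hasDerivWithinAt
  have hd2 : HasDerivWithinAt (fun t : ℝ => f (x - t • u)) (-1) (Set.Ici 0) 0 := by
    refine HasDerivWithinAt.congr_of_eventuallyEq ?_ heqev (by simp)
    simpa using ((hasDerivAt_id (0:ℝ)).const_sub (f x)).hasDerivWithinAt
  have hder : fderiv ℝ f x (-u) = -1 := by
    have h1 := hd1.derivWithin (uniqueDiffOn_Ici 0 0 Set.self_mem_Ici)
    have h2 := hd2.derivWithin (uniqueDiffOn_Ici 0 0 Set.self_mem_Ici)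
    rw [← h1, h2]
  have hfu : fderiv ℝ f x u = 1 := by
    have : fderiv ℝ f x (-u) = -(fderiv ℝ f x u) := by simp
    rw [this] at hder; linarith
  -- gradient equals u
  have hgradinner : inner ℝ (gradient f x) u = (1:ℝ) := by
    have := hdiff.hasGradientAt
    rw [hasGradientAt_iff_hasFDerivAt] at this
    have hfd : fderiv ℝ f x = InnerProductSpace.toDual ℝ E (gradient f x) :=
      this.fderiv
    rw [hfd] at hfu
    simpa [InnerProductSpace.toDual_apply_apply] using hfu
  have hgradnorm_le : ‖gradient f x‖ ≤ 1 := by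
    have hfdnorm : ‖fderiv ℝ f x‖ ≤ 1 := by
      simpa using norm_fderiv_le_of_lipschitz ℝ hf (x₀ := x)
    have := hdiff.hasGradientAt
    rw [hasGradientAt_iff_hasFDerivAt] at this
    have hfd : fderiv ℝ f x = InnerProductSpace.toDual ℝ E (gradient f x) :=
      this.fderiv
    rw [hfd] at hfdnorm
    rwa [LinearIsometryEquiv.norm_map] at hfdnorm
  have hgrad : gradient f x = u := by
    have hsq : ‖gradient f x - u‖ ^ 2 ≤ 0 := by
      have hexp : ‖gradient f x - u‖ ^ 2 =
          ‖gradient f x‖ ^ 2 - 2 * inner ℝ (gradient f x) u + ‖u‖ ^ 2 := by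
        rw [← real_inner_self_eq_norm_sq, ← real_inner_self_eq_norm_sq,
          ← real_inner_self_eq_norm_sq]
        simp only [inner_sub_sub_self]
        ring_nf
        rw [real_inner_comm u (gradient f x)]
        ring
      have hn2 : ‖gradient f x‖ ^ 2 ≤ 1 := by
        have := hgradnorm_le
        nlinarith [norm_nonneg (gradient f x)]
      rw [hexp, hgradinner, hunorm]
      nlinarith
    have := sq_nonneg ‖gradient f x - u‖
    have : ‖gradient f x - u‖ = 0 := by nlinarith
    rwa [norm_eq_zero, sub_eq_zero] at this
  -- the point x_δ
  have hfxT : f x ≤ T := by rw [← heq]; linarith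
  have hzero : f (x - f x • gradient f x) ≤ 0 := by
    rw [hgrad, gkey (f x) ⟨hfx, hfxT⟩]; linarith
  have hnorm : ‖x - (x - f x • gradient f x)‖ = f x := by
    rw [sub_sub_cancel, norm_smul, Real.norm_eq_abs, abs_of_nonneg hfx, hgrad,
      hunorm, mul_one]
  refine ⟨⟨⟨x - f x • gradient f x, hzero, hnorm⟩, ?_⟩, hzero, hnorm⟩
  rintro a ⟨z, hz, rfl⟩
  have := lip x z
  simp only [Set.mem_setOf_eq] at hz
  linarith
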